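/- Let S ⊆ (Fin 3)^d be an ε-sparse set, N = |S|, and let C ⊆ (Fin 3)^S be a set of words indexed by S. For x ∈ C define S_x = {(α, x_α) : α ∈ S} ⊆ (Fin 3)^{d+1} (appending x_α as the last coordinate). Then each S_x is (ε/2)-sparse in (Fin 3)^{d+1}. -/
import Mathlib


/-- A set `S ⊆ (Fin 3)^m` is `η`-sparse if pairwise Hamming distances are at least `ηm`
and every `α ∈ S` is the unique element of `S` at distance `m` from some index `γ`. -/
def EpsSparse {m : ℕ} (η : ℝ) (S : Finset (Fin m → Fin 3)) : Prop :=
  (∀ α ∈ S, ∀ β ∈ S, α ≠ β → η * m ≤ (hammingDist α β : ℝ)) ∧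
  ∀ α ∈ S, ∃ γ : Fin m → Fin 3, S.filter (fun β => hammingDist γ β = m) = {α}

lemma hamming_snoc {d : ℕ} (a b : Fin d → Fin 3) (c c' : Fin 3) :
    hammingDist (Fin.snoc a c : Fin (d+1) → Fin 3) (Fin.snoc b c') =
      hammingDist a b + if c = c' then 0 else 1 := by
  classical
  simp only [hammingDist, Finset.card_filter]
  rw [Fin.sum_univ_castSucc]
  simp [Fin.snoc_castSucc, Fin.snoc_last]

lemma fin3_succ_ne (c : Fin 3) : c + 1 ≠ c := by revert c; decide

/-- Appending to each element `α` of an `ε`-sparse set `S ⊆ (Fin 3)^d` a last coordinate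
`x α` yields an `(ε/2)`-sparse set in `(Fin 3)^{d+1}`. -/
theorem appended_set_sparse {d : ℕ} (ε : ℝ) (hε0 : 0 < ε) (hε1 : ε ≤ 1)
    (S : Finset (Fin d → Fin 3)) (hS : EpsSparse ε S)
    (x : (Fin d → Fin 3) → Fin 3) :
    EpsSparse (ε / 2) (S.image (fun α => Fin.snoc α (x α))) := by
  obtain ⟨hdist, huniq⟩ := hS
  constructor
  · rintro a' ha' b' hb' hne
    obtain ⟨a, ha, rfl⟩ := Finset.mem_image.mp ha'
    obtain ⟨b, hb, rfl⟩ := Finset.mem_image.mp hb'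
    have hab : a ≠ b := by rintro rfl; exact hne rfl
    rcases Nat.eq_zero_or_pos d with hd | hd
    · subst hd; exact absurd (Subsingleton.elim a b) hab
    have h1 : ε * d ≤ (hammingDist a b : ℝ) := hdist a ha b hb hab
    have h2 : (hammingDist a b : ℝ) ≤
        (hammingDist (Fin.snoc a (x a) : Fin (d+1) → Fin 3) (Fin.snoc b (x b)) : ℝ) := by
      rw [hamming_snoc]; split_ifs <;> push_cast <;> linarith
    have h3 : ε / 2 * (d + 1 : ℕ) ≤ ε * d := by
      push_cast
      have : (1 : ℝ) ≤ d := by exact_mod_cast hd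
      nlinarith
    linarith
  · rintro a' ha'
    obtain ⟨a, ha, rfl⟩ := Finset.mem_image.mp ha'
    obtain ⟨γ, hγ⟩ := huniq a ha
    have hmemγ : a ∈ S.filter (fun β => hammingDist γ β = d) := by
      rw [hγ]; exact Finset.mem_singleton_self a
    have hγa : hammingDist γ a = d := (Finset.mem_filter.mp hmemγ).2
    refine ⟨Fin.snoc γ (x a + 1), ?_⟩
    ext b'
    simp only [Finset.mem_filter, Finset.mem_image, Finset.mem_singleton]
    constructor
    · rintro ⟨⟨b, hb, rfl⟩, hdistb⟩
      rw [hamming_snoc] at hdistb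
      have hle : hammingDist γ b ≤ d := by
        simpa using hammingDist_le_card_fintype (x := γ) (y := b)
      have hγb : hammingDist γ b = d := by
        by_cases h : x a + 1 = x b <;> simp [h] at hdistb <;> omega
      have : b ∈ S.filter (fun β => hammingDist γ β = d) :=
        Finset.mem_filter.mpr ⟨hb, hγb⟩
      rw [hγ, Finset.mem_singleton] at this
      subst this; rfl
    · rintro rfl
      refine ⟨⟨a, ha, rfl⟩, ?_⟩
      rw [hamming_snoc, hγa, if_neg (fin3_succ_ne (x a))]
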